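/- For a differentiable nonnegatively homogeneous function F : ℝⁿ → ℝ (F(αx) = αF(x) for α ≥ 0), the X-Gradient attribution XG_i(F, x) = x_i · (∂F/∂x_i)(x) equals the Integrated Gradients attribution with zero baseline: XG_i(F,x) = ∫₀¹ (∂F/∂x_i)(αx) · x_i dα. -/

import Mathlib

/-- For a continuously differentiable nonnegatively homogeneous `F`, the X-Gradient
attribution equals Integrated Gradients with zero baseline. -/
theorem xgradient_eq_integrated_gradients
    (n : ℕ) (F : (Fin n → ℝ) → ℝ)
    (hF : ContDiff ℝ 1 F)
    (hhom : ∀ α : ℝ, 0 ≤ α → ∀ x : Fin n → ℝ, F (α • x) = α * F x)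
    (x : Fin n → ℝ) (i : Fin n) :
    x i * fderiv ℝ F x (Pi.single i 1)
      = ∫ α in (0:ℝ)..1, fderiv ℝ F (α • x) (Pi.single i 1) * x i := by
  have hdiff : Differentiable ℝ F := hF.differentiable one_ne_zero
  -- gradient is homogeneous of degree 0 on α > 0
  have key : ∀ α : ℝ, 0 < α →
      fderiv ℝ F (α • x) (Pi.single i 1) = fderiv ℝ F x (Pi.single i 1) := by
    intro α hα
    have h1 : HasFDerivAt (fun y : Fin n → ℝ => F (α • y))
        ((fderiv ℝ F (α • x)).comp (α • ContinuousLinearMap.id ℝ (Fin n → ℝ))) x := by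
      have hsm : HasFDerivAt (fun y : Fin n → ℝ => α • y)
          (α • ContinuousLinearMap.id ℝ (Fin n → ℝ)) x :=
        (hasFDerivAt_id x).const_smul α
      exact (hdiff (α • x)).hasFDerivAt.comp x hsm
    have h2 : HasFDerivAt (fun y : Fin n → ℝ => F (α • y)) (α • fderiv ℝ F x) x := by
      have : (fun y : Fin n → ℝ => F (α • y)) = fun y => α • F y := by
        funext y
        simpa using hhom α hα.le y
      rw [this]
      exact (hdiff x).hasFDerivAt.const_smul α
    have heq := h1.unique h2
    have h3 : fderiv ℝ F (α • x) (α • (Pi.single i 1 : Fin n → ℝ))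
        = α • fderiv ℝ F x (Pi.single i 1) := by
      have := ContinuousLinearMap.ext_iff.mp heq (Pi.single i 1)
      simpa using this
    rw [map_smul] at h3
    exact smul_right_injective ℝ hα.ne' h3
  have hconst : ∫ α in (0:ℝ)..1, fderiv ℝ F (α • x) (Pi.single i 1) * x i
      = ∫ _ in (0:ℝ)..1, fderiv ℝ F x (Pi.single i 1) * x i := by
    apply intervalIntegral.integral_congr_ae
    filter_upwards with α hα
    rw [Set.uIoc_of_le (by norm_num : (0:ℝ) ≤ 1)] at hα
    rw [key α hα.1]
  rw [hconst, intervalIntegral.integral_const]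
  simp [mul_comm]
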